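/- Suppose (α, c) is feasible for the weighted max-min problem, some user n satisfies γ_n Σ_k α_{nk} R_{nk} > c, and there exists a bin k₀ with α_{n k₀} > 0 and R_{m k₀} > 0 for every m ≠ n. Then for sufficiently small ε > 0, the modified allocation α'_{n k₀} = α_{n k₀} − ε, α'_{m k₀} = α_{m k₀} + ε/(N−1) for m ≠ n, α'_{jk} = α_{jk} otherwise, is feasible and satisfies γ_m Σ_k α'_{mk} R_{mk} > c for every user m. -/

import Mathlib

/-- Moving a small amount `ε` of user `n`'s share of bin `k₀` uniformly to the other
`N - 1` users keeps feasibility and makes every weighted rate strictly exceed `c`. -/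
theorem weighted_maxmin_perturbation (N K : ℕ) (hN : 2 ≤ N)
    (γ : Fin N → ℝ) (hγ : ∀ n, 0 < γ n)
    (R : Fin N → Fin K → ℝ) (hR : ∀ n k, 0 ≤ R n k)
    (α : Fin N → Fin K → ℝ) (c : ℝ)
    (hα0 : ∀ n k, 0 ≤ α n k)
    (hcol : ∀ k, ∑ n, α n k = 1)
    (hfeas : ∀ n, c ≤ γ n * ∑ k, α n k * R n k)
    (n : Fin N)
    (hstrict : c < γ n * ∑ k, α n k * R n k)
    (k₀ : Fin K)
    (hαnk : 0 < α n k₀)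
    (hRmk : ∀ m, m ≠ n → 0 < R m k₀) :
    ∃ ε₀ > (0 : ℝ), ∀ ε : ℝ, 0 < ε → ε < ε₀ →
      ∀ α' : Fin N → Fin K → ℝ,
        (∀ j : Fin N, ∀ kk : Fin K,
          α' j kk = if kk = k₀ then
              (if j = n then α j kk - ε else α j kk + ε / (N - 1))
            else α j kk) →
        (∀ m kk, 0 ≤ α' m kk) ∧ (∀ kk, ∑ m, α' m kk = 1) ∧
        (∀ m, c < γ m * ∑ kk, α' m kk * R m kk) := by
  have hN1 : (0:ℝ) < (N:ℝ) - 1 := by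
    have : (2:ℝ) ≤ (N:ℝ) := by exact_mod_cast hN
    linarith
  set S := ∑ k, α n k * R n k with hS
  have hpos : 0 < γ n * S - c := by linarith
  have hden : 0 < γ n * (R n k₀ + 1) := by
    have := hγ n; have := hR n k₀; nlinarith
  refine ⟨min (α n k₀) ((γ n * S - c) / (γ n * (R n k₀ + 1))),
    lt_min hαnk (div_pos hpos hden), ?_⟩
  intro ε hε hεlt α' hα'
  have hεα : ε < α n k₀ := lt_of_lt_of_le hεlt (min_le_left _ _)
  have hεR : ε * (γ n * R n k₀) < γ n * S - c := by
    have h2 : ε < (γ n * S - c) / (γ n * (R n k₀ + 1)) :=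
      lt_of_lt_of_le hεlt (min_le_right _ _)
    have h3 := (lt_div_iff₀ hden).mp h2
    nlinarith [hγ n]
  have hεN : 0 ≤ ε / ((N:ℝ) - 1) := le_of_lt (div_pos hε hN1)
  refine ⟨?_, ?_, ?_⟩
  · intro m kk
    rw [hα' m kk]
    split_ifs with h1 h2
    · subst h2; subst h1; linarith
    · linarith [hα0 m kk]
    · exact hα0 m kk
  · intro kk
    by_cases hk : kk = k₀
    · have h1 : ∀ m ∈ Finset.univ, α' m kk =
          α m kk + (if m = n then -ε else ε / ((N:ℝ) - 1)) := by
        intro m _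
        by_cases hm : m = n
        · rw [hα' m kk, if_pos hk, if_pos hm, if_pos hm]; ring
        · rw [hα' m kk, if_pos hk, if_neg hm, if_neg hm]
      rw [Finset.sum_congr rfl h1, Finset.sum_add_distrib, hcol]
      rw [← Finset.add_sum_erase _ _ (Finset.mem_univ n)]
      rw [if_pos rfl]
      have h2 : ∀ m ∈ Finset.univ.erase n,
          (if m = n then -ε else ε / ((N:ℝ) - 1)) = ε / ((N:ℝ) - 1) := by
        intro m hm
        rw [if_neg (Finset.ne_of_mem_erase hm)]
      rw [Finset.sum_congr rfl h2, Finset.sum_const,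
        Finset.card_erase_of_mem (Finset.mem_univ n), Finset.card_univ,
        Fintype.card_fin]
      have hcast : ((N - 1 : ℕ) : ℝ) = (N:ℝ) - 1 := by
        have : 1 ≤ N := by omega
        push_cast [this]; ring
      rw [nsmul_eq_mul, hcast]
      field_simp
      ring
    · have h1 : ∀ m ∈ Finset.univ, α' m kk = α m kk := by
        intro m _; rw [hα' m kk, if_neg hk]
      rw [Finset.sum_congr rfl h1, hcol]
  · intro m
    by_cases hm : m = n
    · subst hm
      have hsum : ∑ kk, α' m kk * R m kk =
          S - ε * R m k₀ := by
        have h1 : ∀ kk ∈ Finset.univ, α' m kk * R m kk =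
            α m kk * R m kk - (if kk = k₀ then ε * R m kk else 0) := by
          intro kk _
          by_cases h : kk = k₀
          · rw [hα' m kk, if_pos h, if_pos rfl, if_pos h]; ring
          · rw [hα' m kk, if_neg h, if_neg h]; ring
        rw [Finset.sum_congr rfl h1, Finset.sum_sub_distrib,
          Finset.sum_ite_eq' Finset.univ k₀ (fun kk => ε * R m kk),
          if_pos (Finset.mem_univ k₀)]
      rw [hsum]
      nlinarith [hγ m]
    · have hsum : ∑ kk, α' m kk * R m kk =
          (∑ kk, α m kk * R m kk) + (ε / ((N:ℝ) - 1)) * R m k₀ := by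
        have h1 : ∀ kk ∈ Finset.univ, α' m kk * R m kk =
            α m kk * R m kk + (if kk = k₀ then (ε / ((N:ℝ) - 1)) * R m kk else 0) := by
          intro kk _
          by_cases h : kk = k₀
          · rw [hα' m kk, if_pos h, if_neg hm, if_pos h]; ring
          · rw [hα' m kk, if_neg h, if_neg h]; ring
        rw [Finset.sum_congr rfl h1, Finset.sum_add_distrib,
          Finset.sum_ite_eq' Finset.univ k₀ (fun kk => (ε / ((N:ℝ) - 1)) * R m kk),
          if_pos (Finset.mem_univ k₀)]
      rw [hsum]
      have h4 := hfeas m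
      have h5 : 0 < (ε / ((N:ℝ) - 1)) * R m k₀ :=
        mul_pos (div_pos hε hN1) (hRmk m hm)
      nlinarith [hγ m]
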